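/- Suppose for all t: (V/2)(||λ(t+1)||² - ||λ(t)||²) + f(y(t)) ≤ C/V + F - η||λ(t)||, with V ≥ 1, λ(0) = 0, f(y(t)) ≥ f_min for all t, and ||λ(t+1) - λ(t)|| ≤ √(2C)/V for all t. Then ||λ(t)|| ≤ (C + F - f_min)/η + √(2C) for all t. -/
import Mathlib


theorem stmt_7 (n : ℕ) (V C F η fmin : ℝ) (hV : 1 ≤ V) (hC : 0 < C) (hη : 0 < η)
    (lam : ℕ → EuclideanSpace ℝ (Fin n)) (fy : ℕ → ℝ)
    (hlam0 : lam 0 = 0)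
    (hfmin : ∀ t, fmin ≤ fy t)
    (hdrift : ∀ t, (V / 2) * (‖lam (t + 1)‖ ^ 2 - ‖lam t‖ ^ 2) + fy t ≤
        C / V + F - η * ‖lam t‖)
    (hstep : ∀ t, ‖lam (t + 1) - lam t‖ ≤ Real.sqrt (2 * C) / V) :
    ∀ t, ‖lam t‖ ≤ (C + F - fmin) / η + Real.sqrt (2 * C) := by
  have hV0 : 0 < V := lt_of_lt_of_le one_pos hV
  have hCV : C / V ≤ C := by
    rw [div_le_iff₀ hV0]
    nlinarith
  -- key: C + F - fmin ≥ 0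
  have hkey : 0 ≤ C + F - fmin := by
    have h0 := hdrift 0
    have h1 := hfmin 0
    have h2 : (0:ℝ) ≤ ‖lam 1‖ ^ 2 := sq_nonneg _
    rw [hlam0] at h0
    simp at h0
    nlinarith [norm_nonneg (lam 0)]
  have hsqrt : 0 ≤ Real.sqrt (2 * C) := Real.sqrt_nonneg _
  have hstep' : Real.sqrt (2 * C) / V ≤ Real.sqrt (2 * C) := by
    rw [div_le_iff₀ hV0]
    nlinarith
  intro t
  induction t with
  | zero =>
    rw [hlam0]
    simp
    positivity
  | succ t ih =>
    by_cases hcase : ‖lam t‖ ≤ (C + F - fmin) / η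
    · calc ‖lam (t + 1)‖ = ‖lam t + (lam (t + 1) - lam t)‖ := by congr 1; abel
        _ ≤ ‖lam t‖ + ‖lam (t + 1) - lam t‖ := norm_add_le _ _
        _ ≤ (C + F - fmin) / η + Real.sqrt (2 * C) := by
            have := (hstep t).trans hstep'
            linarith
    · push_neg at hcase
      have h0 := hdrift t
      have h1 := hfmin t
      have hlt : η * ‖lam t‖ > C + F - fmin := by
        rwa [gt_iff_lt, ← div_lt_iff₀' hη]
      have hsq : ‖lam (t + 1)‖ ^ 2 ≤ ‖lam t‖ ^ 2 := by nlinarith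
      have hle : ‖lam (t + 1)‖ ≤ ‖lam t‖ := by
        nlinarith [norm_nonneg (lam t), norm_nonneg (lam (t + 1))]
      linarith
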